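/- Let g ≥ 1 be a natural number, let n be the least natural number with 𝒢(n) = g, and let m be the least natural number with 𝒢(m) = g + 1 (assuming both exist). Then 2(m − n) ≥ g. -/

import Mathlib

/-- The Grundy values of single-heap Fibonacci nim positions `(n, r)`, where `n` is the heap
size and `r` is the maximal number of tokens that may be removed on the next move:
`grundy n r` is the least natural number not of the form
`grundy (n - k) (min (2 * k) (n - k))` for some `k` with `1 ≤ k ≤ min r n`.
In particular `grundy 0 r = 0` and `grundy n 0 = 0`. -/
noncomputable def grundy (n r : ℕ) : ℕ :=
  sInf {m : ℕ | ∀ k, 1 ≤ k → k ≤ min r n → grundy (n - k) (min (2 * k) (n - k)) ≠ m}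
termination_by n
decreasing_by
  have : k ≤ n := le_trans ‹k ≤ min r n› (min_le_right _ _)
  omega

lemma grundy_set_nonempty (n r : ℕ) :
    {m : ℕ | ∀ k, 1 ≤ k → k ≤ min r n → grundy (n - k) (min (2 * k) (n - k)) ≠ m}.Nonempty := by
  classical
  refine ⟨((Finset.Icc 1 n).sup fun k => grundy (n - k) (min (2 * k) (n - k))) + 1, ?_⟩
  intro k hk1 hk2 h
  have hle : grundy (n - k) (min (2 * k) (n - k)) ≤
      (Finset.Icc 1 n).sup fun k => grundy (n - k) (min (2 * k) (n - k)) :=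
    Finset.le_sup (f := fun k => grundy (n - k) (min (2 * k) (n - k))) (Finset.mem_Icc.mpr ⟨hk1, le_trans hk2 (min_le_right _ _)⟩)
  omega

lemma grundy_mono (n : ℕ) {r r' : ℕ} (h : r ≤ r') : grundy n r ≤ grundy n r' := by
  conv_lhs => rw [grundy]
  conv_rhs => rw [grundy]
  have hmem := Nat.sInf_mem (grundy_set_nonempty n r')
  apply Nat.sInf_le
  intro k hk1 hk2
  exact hmem k hk1 (le_trans hk2 (min_le_min h le_rfl))

lemma grundy_le (n r : ℕ) : grundy n r ≤ min r n := by
  classical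
  set c := min r n with hc
  set f : ℕ → ℕ := fun k => grundy (n - k) (min (2 * k) (n - k)) with hf
  have hcard : ((Finset.Icc 1 c).image f).card < (Finset.range (c + 1)).card := by
    have h1 : ((Finset.Icc 1 c).image f).card ≤ (Finset.Icc 1 c).card :=
      Finset.card_image_le
    have h2 : (Finset.Icc 1 c).card = c := by simp
    have h3 : (Finset.range (c + 1)).card = c + 1 := by simp
    omega
  have hns : ¬ Finset.range (c + 1) ⊆ (Finset.Icc 1 c).image f := fun hsub =>
    absurd (Finset.card_le_card hsub) (not_le.mpr hcard)
  obtain ⟨j, hj, hj2⟩ := Finset.not_subset.mp hns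
  have hjc : j ≤ c := Nat.lt_succ_iff.mp (Finset.mem_range.mp hj)
  rw [grundy]
  refine le_trans (Nat.sInf_le ?_) hjc
  intro k hk1 hk2 heq
  exact hj2 (Finset.mem_image.mpr ⟨k, Finset.mem_Icc.mpr ⟨hk1, hk2⟩, heq⟩)

lemma grundy_exists (n r v : ℕ) (h : v < grundy n r) :
    ∃ k, 1 ≤ k ∧ k ≤ min r n ∧ grundy (n - k) (min (2 * k) (n - k)) = v := by
  by_contra hc
  push_neg at hc
  have hmem : v ∈ {m : ℕ | ∀ k, 1 ≤ k → k ≤ min r n →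
      grundy (n - k) (min (2 * k) (n - k)) ≠ m} :=
    fun k hk1 hk2 => hc k hk1 hk2
  have := Nat.sInf_le hmem
  rw [grundy] at h
  omega

lemma grundy_lt_of_lt_first (g m : ℕ) (hm : ∀ x : ℕ, grundy x x = g + 1 → m ≤ x) :
    ∀ x, x < m → grundy x x ≤ g := by
  intro x
  induction x using Nat.strong_induction_on with
  | _ x ih =>
    intro hxm
    by_contra hgt
    push_neg at hgt
    rcases eq_or_lt_of_le (show g + 1 ≤ grundy x x from hgt) with heq | hlt
    · exact absurd (hm x heq.symm) (by omega)
    · obtain ⟨k, hk1, hk2, hk3⟩ := grundy_exists x x (g + 1) hlt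
      have hkx : k ≤ x := le_trans hk2 (min_le_right _ _)
      have h1 : grundy (x - k) (x - k) ≤ g := ih (x - k) (by omega) (by omega)
      have h2 : g + 1 ≤ grundy (x - k) (x - k) :=
        hk3 ▸ grundy_mono (x - k) (min_le_right _ _)
      omega

/-- Let `g ≥ 1`, let `n` be the least natural number with `𝒢(n) = g`, and let `m` be the
least natural number with `𝒢(m) = g + 1`.  Then `2(m - n) ≥ g`. -/
theorem grundy_first_occurrence_gap (g n m : ℕ) (hg : 1 ≤ g)
    (hn : IsLeast {x : ℕ | grundy x x = g} n)
    (hm : IsLeast {x : ℕ | grundy x x = g + 1} m) :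
    g ≤ 2 * (m - n) := by
  obtain ⟨hmem_n, hlb_n⟩ := hn
  obtain ⟨hmem_m, hlb_m⟩ := hm
  have hg' : g < grundy m m := by
    have : grundy m m = g + 1 := hmem_m
    omega
  obtain ⟨k, hk1, hk2, hk3⟩ := grundy_exists m m g hg'
  have hkm : k ≤ m := le_trans hk2 (min_le_right _ _)
  have hA : grundy (m - k) (m - k) ≤ g :=
    grundy_lt_of_lt_first g m (fun x hx => hlb_m hx) (m - k) (by omega)
  have hge : g ≤ grundy (m - k) (m - k) :=
    hk3 ▸ grundy_mono (m - k) (min_le_right _ _)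
  have heq : grundy (m - k) (m - k) = g := le_antisymm hA hge
  have hnx : n ≤ m - k := hlb_n heq
  have hb : g ≤ 2 * k := by
    have hle := grundy_le (m - k) (min (2 * k) (m - k))
    omega
  omega
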